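/- Let x₁,…,x_k ∈ ℝ² be nonzero vectors. A linear functional f with f(xᵢ) > 0 for all i exists if and only if there is a permutation σ of {1,…,k} such that angle(x_{σ(1)}, x_{σ(k)}) = ∑_{i=1}^{k−1} angle(x_{σ(i)}, x_{σ(i+1)}) and angle(x_{σ(1)}, x_{σ(k)}) < π. -/

import Mathlib

open InnerProductGeometry Real RealInnerProductSpace

noncomputable section

instance euclidFact2 : Fact (Module.finrank ℝ (EuclideanSpace ℝ (Fin 2)) = 2) :=
  ⟨finrank_euclideanSpace_fin⟩

noncomputable def stdOrient : Orientation ℝ (EuclideanSpace ℝ (Fin 2)) (Fin 2) :=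
  (EuclideanSpace.basisFun (Fin 2) ℝ).toBasis.orientation

lemma my_angle_triangle {x y z : EuclideanSpace ℝ (Fin 2)} (hx : x ≠ 0) (hy : y ≠ 0)
    (hz : z ≠ 0) : angle x z ≤ angle x y + angle y z := by
  set o := stdOrient
  rw [o.angle_eq_abs_oangle_toReal hx hz, o.angle_eq_abs_oangle_toReal hx hy,
    o.angle_eq_abs_oangle_toReal hy hz]
  have hadd := o.oangle_add hx hy hz
  set a := o.oangle x y with ha
  set b := o.oangle y z with hb
  rw [← hadd]
  have hco : a + b = ((a.toReal + b.toReal : ℝ) : Real.Angle) := by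
    rw [Real.Angle.coe_add, a.coe_toReal, b.coe_toReal]
  by_cases h : -π < a.toReal + b.toReal ∧ a.toReal + b.toReal ≤ π
  · rw [hco, Real.Angle.toReal_coe_eq_self_iff.2 h]
    exact abs_add_le _ _
  · have h1 : π ≤ |a.toReal + b.toReal| := by
      rcases not_and_or.1 h with h' | h' <;> push_neg at h'
      · exact le_abs.2 (Or.inr (by linarith))
      · exact le_abs.2 (Or.inl h'.le)
    calc |(a + b).toReal| ≤ π := Real.Angle.abs_toReal_le_pi _
      _ ≤ |a.toReal + b.toReal| := h1
      _ ≤ |a.toReal| + |b.toReal| := abs_add_le _ _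

theorem planar_supporting_line_test (k : ℕ) (hk : 0 < k)
    (x : Fin k → EuclideanSpace ℝ (Fin 2)) (hx : ∀ i, x i ≠ 0) :
    (∃ f : EuclideanSpace ℝ (Fin 2) →ₗ[ℝ] ℝ, ∀ i, 0 < f (x i)) ↔
    (∃ σ : Equiv.Perm (Fin k),
      InnerProductGeometry.angle (x (σ ⟨0, hk⟩)) (x (σ ⟨k - 1, Nat.sub_lt hk one_pos⟩)) =
        ∑ i : Fin (k - 1),
          InnerProductGeometry.angle (x (σ (Fin.castLE (Nat.sub_le k 1) i)))
            (x (σ ⟨i + 1, by omega⟩)) ∧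
      InnerProductGeometry.angle (x (σ ⟨0, hk⟩)) (x (σ ⟨k - 1, Nat.sub_lt hk one_pos⟩)) <
        Real.pi) := by
  constructor
  · rintro ⟨f, hf⟩
    set o := stdOrient with ho
    set v : EuclideanSpace ℝ (Fin 2) :=
      (InnerProductSpace.toDual ℝ (EuclideanSpace ℝ (Fin 2))).symm
        (LinearMap.toContinuousLinearMap f) with hv
    have hfv : ∀ w, ⟪v, w⟫ = f w := fun w => by
      rw [hv, InnerProductSpace.toDual_symm_apply]
      simp
    have hvpos : ∀ i, 0 < ⟪v, x i⟫ := fun i => by rw [hfv]; exact hf i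
    have hvne : v ≠ 0 := by
      intro h
      have := hvpos ⟨0, hk⟩
      rw [h, inner_zero_left] at this
      exact lt_irrefl _ this
    set ψ : Fin k → ℝ := fun i => (o.oangle v (x i)).toReal with hψdef
    have hψ : ∀ i, |ψ i| < π / 2 := by
      intro i
      have h1 : angle v (x i) = |ψ i| := o.angle_eq_abs_oangle_toReal hvne (hx i)
      by_contra hcon
      push_neg at hcon
      have h2 : Real.cos (angle v (x i)) ≤ 0 := by
        apply Real.cos_nonpos_of_pi_div_two_le_of_le
        · rw [h1]; exact hcon
        · calc angle v (x i) ≤ π := angle_le_pi _ _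
            _ ≤ π + π / 2 := by linarith [Real.pi_pos]
      rw [cos_angle] at h2
      have h3 : 0 < ⟪v, x i⟫ / (‖v‖ * ‖x i‖) :=
        div_pos (hvpos i) (mul_pos (norm_pos_iff.2 hvne) (norm_pos_iff.2 (hx i)))
      linarith
    set σ := Tuple.sort ψ with hσ
    have hmono : Monotone (ψ ∘ σ) := Tuple.monotone_sort ψ
    have key : ∀ i j : Fin k, i ≤ j →
        InnerProductGeometry.angle (x (σ i)) (x (σ j)) = ψ (σ j) - ψ (σ i) := by
      intro i j hij
      have hle : ψ (σ i) ≤ ψ (σ j) := hmono hij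
      have habsi := abs_lt.1 (hψ (σ i))
      have habsj := abs_lt.1 (hψ (σ j))
      have hadd := o.oangle_add (hx (σ i)) hvne (hx (σ j))
      have hrev : o.oangle (x (σ i)) v = -o.oangle v (x (σ i)) := o.oangle_rev _ _
      have hco : o.oangle (x (σ i)) (x (σ j)) = ((ψ (σ j) - ψ (σ i) : ℝ) : Real.Angle) := by
        rw [← hadd, hrev, hψdef]
        rw [Real.Angle.coe_sub, Real.Angle.coe_toReal, Real.Angle.coe_toReal, neg_add_eq_sub]
      rw [o.angle_eq_abs_oangle_toReal (hx _) (hx _), hco,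
        Real.Angle.toReal_coe_eq_self_iff.2 ⟨by linarith [Real.pi_pos], by linarith⟩,
        abs_of_nonneg (by linarith)]
    have h0k : (⟨0, hk⟩ : Fin k) ≤ ⟨k - 1, Nat.sub_lt hk one_pos⟩ := by
      exact Fin.mk_le_mk.2 (Nat.zero_le _)
    refine ⟨σ, ?_, ?_⟩
    · rw [key _ _ h0k]
      have hterm : ∀ i : Fin (k - 1),
          InnerProductGeometry.angle (x (σ (Fin.castLE (Nat.sub_le k 1) i)))
              (x (σ ⟨(i : ℕ) + 1, by omega⟩)) =
            ψ (σ ⟨(i : ℕ) + 1, by omega⟩) - ψ (σ (Fin.castLE (Nat.sub_le k 1) i)) := by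
        intro i
        exact key _ _ (by exact Fin.mk_le_mk.2 (by omega))
      rw [Finset.sum_congr rfl fun i _ => hterm i]
      have hmin : ∀ n : ℕ, min n (k - 1) < k := fun n => by omega
      set g : ℕ → ℝ := fun n => ψ (σ ⟨min n (k - 1), hmin n⟩) with hg
      have geq : ∀ n (h : n < k), n ≤ k - 1 → g n = ψ (σ ⟨n, h⟩) := by
        intro n h hn
        show ψ (σ ⟨min n (k - 1), hmin n⟩) = _
        exact congrArg (fun t => ψ (σ t)) (Fin.ext (show min n (k - 1) = n by omega))
      have ecast : ∀ (i : Fin (k - 1)) (h : (i : ℕ) < k),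
          (⟨(i : ℕ), h⟩ : Fin k) = Fin.castLE (Nat.sub_le k 1) i := fun i h =>
        Fin.ext (Fin.coe_castLE (Nat.sub_le k 1) i).symm
      have hgterm : ∀ i : Fin (k - 1),
          ψ (σ ⟨(i : ℕ) + 1, by omega⟩) - ψ (σ (Fin.castLE (Nat.sub_le k 1) i)) =
            g ((i : ℕ) + 1) - g (i : ℕ) := by
        intro i
        have hlt := i.isLt
        rw [geq ((i : ℕ) + 1) (by omega) (by omega), geq (i : ℕ) (by omega) (by omega),
          ecast i (by omega)]
      rw [Finset.sum_congr rfl fun i _ => hgterm i]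
      rw [Fin.sum_univ_eq_sum_range (fun n => g (n + 1) - g n) (k - 1),
        Finset.sum_range_sub g (k - 1)]
      rw [geq (k - 1) (Nat.sub_lt hk one_pos) le_rfl, geq 0 hk (by omega)]
    · rw [key _ _ h0k]
      have h1 := abs_lt.1 (hψ (σ ⟨0, hk⟩))
      have h2 := abs_lt.1 (hψ (σ ⟨k - 1, Nat.sub_lt hk one_pos⟩))
      linarith
  · rintro ⟨σ, hsum, hlt⟩
    have hmin : ∀ n : ℕ, min n (k - 1) < k := fun n => by omega
    set z : ℕ → EuclideanSpace ℝ (Fin 2) := fun n => x (σ ⟨min n (k - 1), hmin n⟩) with hz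
    have hzne : ∀ n, z n ≠ 0 := fun n => hx _
    have zeq : ∀ n (h : n < k), n ≤ k - 1 → z n = x (σ ⟨n, h⟩) := by
      intro n h hn
      show x (σ ⟨min n (k - 1), hmin n⟩) = _
      exact congrArg (fun t => x (σ t)) (Fin.ext (show min n (k - 1) = n by omega))
    have hz0 : z 0 = x (σ ⟨0, hk⟩) := zeq 0 hk (by omega)
    have hzl : z (k - 1) = x (σ ⟨k - 1, Nat.sub_lt hk one_pos⟩) :=
      zeq (k - 1) (Nat.sub_lt hk one_pos) le_rfl
    set A := InnerProductGeometry.angle (z 0) (z (k - 1)) with hA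
    have hAsum : A = ∑ j ∈ Finset.range (k - 1),
        InnerProductGeometry.angle (z j) (z (j + 1)) := by
      rw [hA, hz0, hzl, hsum,
        ← Fin.sum_univ_eq_sum_range
          (fun j => InnerProductGeometry.angle (z j) (z (j + 1))) (k - 1)]
      refine Finset.sum_congr rfl fun i _ => ?_
      have hlt' := i.isLt
      have e1 : z (i : ℕ) = x (σ (Fin.castLE (Nat.sub_le k 1) i)) := by
        rw [zeq (i : ℕ) (by omega) (by omega)]
        exact congrArg (fun t => x (σ t)) (Fin.ext (Fin.coe_castLE (Nat.sub_le k 1) i).symm)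
      have e2 : z ((i : ℕ) + 1) = x (σ ⟨(i : ℕ) + 1, by omega⟩) :=
        zeq ((i : ℕ) + 1) (by omega) (by omega)
      rw [e1, e2]
    have hAlt : A < π := by rw [hA, hz0, hzl]; exact hlt
    have chain : ∀ m n, m ≤ n → InnerProductGeometry.angle (z m) (z n) ≤
        ∑ j ∈ Finset.Ico m n, InnerProductGeometry.angle (z j) (z (j + 1)) := by
      intro m n hmn
      induction n, hmn using Nat.le_induction with
      | base => simp [angle_self (hzne m)]
      | succ n hmn ih =>
        calc InnerProductGeometry.angle (z m) (z (n + 1)) ≤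
            InnerProductGeometry.angle (z m) (z n) +
              InnerProductGeometry.angle (z n) (z (n + 1)) :=
            my_angle_triangle (hzne m) (hzne n) (hzne (n + 1))
          _ ≤ _ := by rw [Finset.sum_Ico_succ_top hmn]; linarith
    have split : ∀ m, m ≤ k - 1 →
        InnerProductGeometry.angle (z 0) (z m) +
          InnerProductGeometry.angle (z m) (z (k - 1)) = A := by
      intro m hm
      have h1 := chain 0 m (Nat.zero_le m)
      have h2 := chain m (k - 1) hm
      have h3 : A ≤ InnerProductGeometry.angle (z 0) (z m) +
          InnerProductGeometry.angle (z m) (z (k - 1)) := by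
        rw [hA]; exact my_angle_triangle (hzne 0) (hzne m) (hzne (k - 1))
      have h4 : ∑ j ∈ Finset.Ico 0 m, InnerProductGeometry.angle (z j) (z (j + 1)) +
          ∑ j ∈ Finset.Ico m (k - 1), InnerProductGeometry.angle (z j) (z (j + 1)) = A := by
        rw [Finset.sum_Ico_consecutive _ (Nat.zero_le m) hm, ← Finset.range_eq_Ico, ← hAsum]
      linarith
    set u := ‖z 0‖⁻¹ • z 0 + ‖z (k - 1)‖⁻¹ • z (k - 1) with hu
    refine ⟨(innerSL ℝ u).toLinearMap, fun i => ?_⟩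
    obtain ⟨m, hm, hxi⟩ : ∃ m, m ≤ k - 1 ∧ x i = z m := by
      refine ⟨(σ.symm i : ℕ), by have := (σ.symm i).isLt; omega, ?_⟩
      rw [zeq ((σ.symm i : ℕ)) (σ.symm i).isLt (by have := (σ.symm i).isLt; omega)]
      rw [Fin.eta, Equiv.apply_symm_apply]
    rw [hxi]
    show 0 < ⟪u, z m⟫
    set α := InnerProductGeometry.angle (z 0) (z m) with hα
    set β := InnerProductGeometry.angle (z m) (z (k - 1)) with hβ
    have hαβ := split m hm
    have hα0 : 0 ≤ α := angle_nonneg _ _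
    have hβ0 : 0 ≤ β := angle_nonneg _ _
    have hA0 : 0 ≤ A := by rw [hA]; exact angle_nonneg _ _
    have hn0 : ‖z 0‖ ≠ 0 := norm_ne_zero_iff.2 (hzne 0)
    have hnl : ‖z (k - 1)‖ ≠ 0 := norm_ne_zero_iff.2 (hzne (k - 1))
    have hnm : (0 : ℝ) < ‖z m‖ := norm_pos_iff.2 (hzne m)
    have hinner1 : ⟪z 0, z m⟫ = Real.cos α * (‖z 0‖ * ‖z m‖) := by
      rw [hα, cos_angle]
      exact (div_mul_cancel₀ _ (mul_ne_zero hn0 hnm.ne')).symm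
    have hinner2 : ⟪z (k - 1), z m⟫ = Real.cos β * (‖z (k - 1)‖ * ‖z m‖) := by
      rw [hβ, angle_comm, cos_angle]
      exact (div_mul_cancel₀ _ (mul_ne_zero hnl hnm.ne')).symm
    have hexp : ⟪u, z m⟫ = ‖z m‖ * (Real.cos α + Real.cos β) := by
      rw [hu, inner_add_left, real_inner_smul_left, real_inner_smul_left, hinner1, hinner2]
      field_simp
    have hcos : 0 < Real.cos α + Real.cos β := by
      rw [Real.cos_add_cos]
      have hc1 : 0 < Real.cos ((α + β) / 2) :=
        Real.cos_pos_of_mem_Ioo ⟨by linarith [Real.pi_pos], by linarith⟩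
      have hc2 : 0 < Real.cos ((α - β) / 2) :=
        Real.cos_pos_of_mem_Ioo ⟨by linarith, by linarith⟩
      positivity
    rw [hexp]
    exact mul_pos hnm hcos
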